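/- Let G = (W, E) be a graph and I ⊆ W an independent set. Consider the many-to-one job market with firms each having k positions, where all firms share a common ranking of workers that places the |I| members of I as the top |I| workers (in any order), and all workers share a common ranking of firms. Then in any run of the local Gale–Shapley dynamics from any initial complete matching, no worker w ∈ I ever loses her job; consequently at most n_f − ⌈|I|/k⌉ firms can end with zero employees, where n_f is the number of firms. -/

import Mathlib

/-- The set of workers employed by firm `f` under assignment `μ`
(`μ w = some f` means worker `w` works at firm `f`; `none` means unemployed). -/
def employs {n nf : ℕ} (μ : Fin n → Option (Fin nf)) (f : Fin nf) : Finset (Fin n) :=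
  Finset.univ.filter (fun w => μ w = some f)

/-- One step of the local Gale–Shapley dynamics: an active worker `a` moves to a
firm `f` employing one of her neighbors in `G`, provided she prefers `f`
(smaller index) to her current situation and `f` either has an empty position or
prefers `a` to its least-preferred (largest-index) current employee `z`, who is
then fired. -/
def LocalGSStep {n nf : ℕ} (k : ℕ) (G : SimpleGraph (Fin n))
    (μ μ' : Fin n → Option (Fin nf)) : Prop :=
  ∃ a f, (∃ y, G.Adj a y ∧ μ y = some f) ∧ (∀ g, μ a = some g → f < g) ∧
    (((employs μ f).card < k ∧ μ' = Function.update μ a (some f)) ∨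
     (∃ z, μ z = some f ∧ (∀ y ∈ employs μ f, y ≤ z) ∧ a < z ∧
        μ' = Function.update (Function.update μ z none) a (some f)))

/-- If `I` is an independent set of `G` whose members are the top-ranked workers
(the common firm ranking is by index, and `I` is downward closed under it), then
along any run of the local Gale–Shapley dynamics from a complete initial
matching, no worker of `I` ever loses her job; consequently at every time at
most `n_f - ⌈|I|/k⌉` firms have zero employees. -/
theorem independent_top_workers_never_fired
    (n nf k : ℕ) (hk : 0 < k) (hn : n = k * nf)
    (G : SimpleGraph (Fin n)) (I : Finset (Fin n))
    (hInd : ∀ u ∈ I, ∀ v ∈ I, ¬ G.Adj u v)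
    (hTop : ∀ w ∈ I, ∀ w' : Fin n, w' ≤ w → w' ∈ I)
    (μ : ℕ → Fin n → Option (Fin nf))
    (hinit : ∀ w, (μ 0 w).isSome)
    (hinitFull : ∀ f, (employs (μ 0) f).card = k)
    (hrun : ∀ t, μ (t + 1) = μ t ∨ LocalGSStep k G (μ t) (μ (t + 1))) :
    ∀ T : ℕ, (∀ w ∈ I, (μ T w).isSome) ∧
      (Finset.univ.filter (fun f => employs (μ T) f = ∅)).card ≤
        nf - (I.card + k - 1) / k := by
  -- Invariant 1: workers in I are always employed.
  have hI : ∀ t, ∀ w ∈ I, (μ t w).isSome := by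
    intro t
    induction t with
    | zero => intro w _; exact hinit w
    | succ t ih =>
      intro w hw
      rcases hrun t with h | h
      · rw [h]; exact ih w hw
      · obtain ⟨a, f, ⟨y, hay, hyf⟩, _hpref, hcase⟩ := h
        rcases hcase with ⟨_, hupd⟩ | ⟨z, hzf, hzmax, haz, hupd⟩
        · rw [hupd]
          by_cases hwa : w = a
          · subst hwa; simp
          · simp only [Function.update_of_ne hwa]; exact ih w hw
        · by_cases hwa : w = a
          · subst hwa; rw [hupd]; simp
          · by_cases hwz : w = z
            · exfalso
              subst hwz
              have haI : a ∈ I := hTop w hw a (le_of_lt haz)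
              have hyI : y ∈ I := by
                have hyemp : y ∈ employs (μ t) f := by
                  simp [employs, hyf]
                exact hTop w hw y (hzmax y hyemp)
              exact hInd a haI y hyI hay
            · rw [hupd, Function.update_of_ne hwa, Function.update_of_ne hwz]
              exact ih w hw
  -- Invariant 2: no firm ever has more than k employees.
  have hcap : ∀ t f, (employs (μ t) f).card ≤ k := by
    intro t
    induction t with
    | zero => intro f; exact le_of_eq (hinitFull f)
    | succ t ih =>
      intro f
      rcases hrun t with h | h
      · rw [h]; exact ih f
      · obtain ⟨a, g, ⟨y, hay, hyg⟩, _hpref, hcase⟩ := h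
        rcases hcase with ⟨hlt, hupd⟩ | ⟨z, hzg, hzmax, haz, hupd⟩
        · by_cases hfg : f = g
          · subst hfg
            have hsub : employs (μ (t+1)) f ⊆ insert a (employs (μ t) f) := by
              intro w hw
              simp only [employs, Finset.mem_filter, Finset.mem_univ, true_and, hupd] at hw
              by_cases hwa : w = a
              · subst hwa; exact Finset.mem_insert_self _ _
              · rw [Function.update_of_ne hwa] at hw
                exact Finset.mem_insert_of_mem (by simp [employs, hw])
            calc (employs (μ (t+1)) f).card
                ≤ (insert a (employs (μ t) f)).card := Finset.card_le_card hsub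
              _ ≤ (employs (μ t) f).card + 1 := Finset.card_insert_le _ _
              _ ≤ k := hlt
          · have hsub : employs (μ (t+1)) f ⊆ employs (μ t) f := by
              intro w hw
              simp only [employs, Finset.mem_filter, Finset.mem_univ, true_and, hupd] at hw ⊢
              by_cases hwa : w = a
              · subst hwa; rw [Function.update_self] at hw
                exact absurd (Option.some_injective _ hw) (Ne.symm hfg)
              · rwa [Function.update_of_ne hwa] at hw
            exact le_trans (Finset.card_le_card hsub) (ih f)
        · have haz' : a ≠ z := ne_of_lt haz
          by_cases hfg : f = g
          · subst hfg
            have hzmem : z ∈ employs (μ t) f := by simp [employs, hzg]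
            have hsub : employs (μ (t+1)) f ⊆ insert a ((employs (μ t) f).erase z) := by
              intro w hw
              simp only [employs, Finset.mem_filter, Finset.mem_univ, true_and, hupd] at hw
              by_cases hwa : w = a
              · subst hwa; exact Finset.mem_insert_self _ _
              · rw [Function.update_of_ne hwa] at hw
                by_cases hwz : w = z
                · subst hwz; rw [Function.update_self] at hw; exact absurd hw (by simp)
                · rw [Function.update_of_ne hwz] at hw
                  exact Finset.mem_insert_of_mem (Finset.mem_erase.mpr ⟨hwz, by simp [employs, hw]⟩)
            calc (employs (μ (t+1)) f).card
                ≤ (insert a ((employs (μ t) f).erase z)).card := Finset.card_le_card hsub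
              _ ≤ ((employs (μ t) f).erase z).card + 1 := Finset.card_insert_le _ _
              _ = (employs (μ t) f).card - 1 + 1 := by rw [Finset.card_erase_of_mem hzmem]
              _ = (employs (μ t) f).card := Nat.succ_pred_eq_of_pos (Finset.card_pos.mpr ⟨z, hzmem⟩)
              _ ≤ k := ih f
          · have hsub : employs (μ (t+1)) f ⊆ employs (μ t) f := by
              intro w hw
              simp only [employs, Finset.mem_filter, Finset.mem_univ, true_and, hupd] at hw ⊢
              by_cases hwa : w = a
              · subst hwa; rw [Function.update_self] at hw
                exact absurd (Option.some_injective _ hw) (Ne.symm hfg)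
              · rw [Function.update_of_ne hwa] at hw
                by_cases hwz : w = z
                · subst hwz; rw [Function.update_self] at hw; exact absurd hw (by simp)
                · rwa [Function.update_of_ne hwz] at hw
            exact le_trans (Finset.card_le_card hsub) (ih f)
  intro T
  refine ⟨hI T, ?_⟩
  -- Counting argument.
  set firms : Finset (Fin nf) := Finset.univ.filter (fun f => (employs (μ T) f).Nonempty) with hfirms
  have hIsub : I ⊆ firms.biUnion (fun f => employs (μ T) f) := by
    intro w hw
    obtain ⟨f, hf⟩ := Option.isSome_iff_exists.mp (hI T w hw)
    have hwemp : w ∈ employs (μ T) f := by simp [employs, hf]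
    refine Finset.mem_biUnion.mpr ⟨f, ?_, hwemp⟩
    simp [hfirms, Finset.Nonempty, employs]
    exact ⟨w, hf⟩
  have hcard1 : I.card ≤ k * firms.card := by
    calc I.card ≤ (firms.biUnion (fun f => employs (μ T) f)).card := Finset.card_le_card hIsub
      _ ≤ ∑ f ∈ firms, (employs (μ T) f).card := Finset.card_biUnion_le
      _ ≤ ∑ _f ∈ firms, k := Finset.sum_le_sum (fun f _ => hcap T f)
      _ = firms.card * k := by rw [Finset.sum_const, smul_eq_mul]
      _ = k * firms.card := Nat.mul_comm _ _
  have hceil : (I.card + k - 1) / k ≤ firms.card := by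
    rw [Nat.div_le_iff_le_mul_add_pred hk]
    omega
  have hcompl : (Finset.univ.filter (fun f => employs (μ T) f = ∅)).card = nf - firms.card := by
    have : Finset.univ.filter (fun f => employs (μ T) f = ∅) = firmsᶜ := by
      ext f
      simp [hfirms, Finset.nonempty_iff_ne_empty]
    rw [this, Finset.card_compl]
    simp
  rw [hcompl]
  exact Nat.sub_le_sub_left hceil nf
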